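/- Let a₀, a₁, a₂ ∈ ℝ with a₀ ≠ 0, let f(x₁,x₂) = a₀ + a₁x₁ + a₂x₂, let U ⊆ ℝ² be open with f > 0 on U, and let u : ℝ² → ℝ be twice continuously differentiable on U. Define f̃(y₁,y₂) = (1/a₀)(1 − a₁y₁ − a₂y₂), the inverse twist S(y) = y/f̃(y), and ũ(y) = u(S(y))·f̃(y) on T(U), where T(x) = x/f(x) (so that ũ(T(x)) = u(x)/f(x)). Then for every x ∈ U, the determinant of the 2×2 Hessian matrix of ũ at T(x) equals (f(x)⁴/a₀²) times the determinant of the 2×2 Hessian matrix of u at x. -/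

import Mathlib

/-- The `i`-th partial derivative of a function on ℝ². -/
noncomputable def pderiv2 (i : Fin 2) (v : (Fin 2 → ℝ) → ℝ) : (Fin 2 → ℝ) → ℝ :=
  fun x => fderiv ℝ v x (Pi.single i 1)

/-- The determinant of the 2×2 Hessian matrix of a function on ℝ². -/
noncomputable def hessDet2 (v : (Fin 2 → ℝ) → ℝ) (x : Fin 2 → ℝ) : ℝ :=
  pderiv2 0 (pderiv2 0 v) x * pderiv2 1 (pderiv2 1 v) x -
    pderiv2 0 (pderiv2 1 v) x * pderiv2 1 (pderiv2 0 v) x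

set_option synthInstance.maxHeartbeats 1000000 in
private lemma clm_eval₂ (φ : (Fin 2 → ℝ) →L[ℝ] ℝ) (z : Fin 2 → ℝ) :
    φ z = z 0 * φ (Pi.single 0 1) + z 1 * φ (Pi.single 1 1) := by
  have hz : z = z 0 • (Pi.single 0 1 : Fin 2 → ℝ) + z 1 • (Pi.single 1 1 : Fin 2 → ℝ) := by
    funext j; fin_cases j <;> simp
  conv_lhs => rw [hz]
  rw [map_add, map_smul, map_smul, smul_eq_mul, smul_eq_mul]

set_option maxHeartbeats 2000000 in
/-- For a C² function u on an open set U ⊆ ℝ² where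
f(x) = a₀ + a₁x₁ + a₂x₂ > 0 (a₀ ≠ 0), the f-twist transform ũ(ỹ) = u(S(y))·f̃(y)
(so that ũ(T(x)) = u(x)/f(x)) satisfies
det Hess ũ (T x) = (f(x)⁴/a₀²)·det Hess u (x) for all x ∈ U. -/
theorem stmt6 (a₀ a₁ a₂ : ℝ) (ha₀ : a₀ ≠ 0)
    (f : (Fin 2 → ℝ) → ℝ) (hf : ∀ x, f x = a₀ + a₁ * x 0 + a₂ * x 1)
    (U : Set (Fin 2 → ℝ)) (hU : IsOpen U) (hfU : ∀ x ∈ U, 0 < f x)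
    (u : (Fin 2 → ℝ) → ℝ) (hu : ContDiffOn ℝ 2 u U)
    (ftil : (Fin 2 → ℝ) → ℝ)
    (hftil : ∀ y, ftil y = (1 / a₀) * (1 - a₁ * y 0 - a₂ * y 1))
    (T S : (Fin 2 → ℝ) → (Fin 2 → ℝ))
    (hT : ∀ x, T x = (f x)⁻¹ • x)
    (hS : ∀ y, S y = (ftil y)⁻¹ • y)
    (util : (Fin 2 → ℝ) → ℝ)
    (hutil : ∀ y, util y = u (S y) * ftil y) :
    ∀ x ∈ U, hessDet2 util (T x) = (f x) ^ 4 / a₀ ^ 2 * hessDet2 u x := by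
  intro x hx
  have hfx : 0 < f x := hfU x hx
  have hfx' : f x ≠ 0 := ne_of_gt hfx
  -- the (constant) derivative of ftil
  set L : (Fin 2 → ℝ) →L[ℝ] ℝ :=
    (-(a₁/a₀)) • (ContinuousLinearMap.proj 0 : (Fin 2 → ℝ) →L[ℝ] ℝ)
      + (-(a₂/a₀)) • (ContinuousLinearMap.proj 1 : (Fin 2 → ℝ) →L[ℝ] ℝ) with hLdef
  have hLe : ∀ v : Fin 2 → ℝ, L v = -(a₁/a₀) * v 0 + -(a₂/a₀) * v 1 := by
    intro v; simp [hLdef]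
  have hftilL : ftil = fun y => 1/a₀ + L y := by
    funext y; rw [hftil, hLe]; field_simp; ring
  have hdftil : ∀ y, HasFDerivAt ftil L y := by
    intro y; rw [hftilL]
    simpa using L.hasFDerivAt.const_add (1/a₀)
  set b : Fin 2 → ℝ := ![-(a₁/a₀), -(a₂/a₀)] with hbdef
  have hLb : ∀ i : Fin 2, L (Pi.single i 1) = b i := by
    intro i; fin_cases i <;> simp [hLe, hbdef]
  -- derivative of S
  have hSeq : S = fun z => (ftil z)⁻¹ • z := funext hS
  set DS : (Fin 2 → ℝ) → ((Fin 2 → ℝ) →L[ℝ] (Fin 2 → ℝ)) := fun y =>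
    (ftil y)⁻¹ • ContinuousLinearMap.id ℝ (Fin 2 → ℝ)
      + ((-(ftil y ^ 2)⁻¹) • L).smulRight y with hDSdef
  have hdS : ∀ y, ftil y ≠ 0 → HasFDerivAt S (DS y) y := by
    intro y hy
    have h1 : HasFDerivAt (fun z => (ftil z)⁻¹) ((-(ftil y ^ 2)⁻¹) • L) y :=
      (hasDerivAt_inv hy).comp_hasFDerivAt y (hdftil y)
    have h2 := h1.smul (hasFDerivAt_id y)
    rw [hSeq]
    simpa [hDSdef] using h2
  -- values at T x
  have hA : a₀ + a₁ * x 0 + a₂ * x 1 ≠ 0 := by rw [← hf x]; exact hfx'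
  have hftilTx : ftil (T x) = (f x)⁻¹ := by
    rw [hftil, hT, hf x]
    simp only [Pi.smul_apply, smul_eq_mul]
    field_simp
    ring
  have hftilTx' : ftil (T x) ≠ 0 := by rw [hftilTx]; exact inv_ne_zero hfx'
  have hSTx : S (T x) = x := by
    rw [hS, hftilTx, inv_inv, hT, smul_smul, mul_inv_cancel₀ hfx', one_smul]
  -- the open set V on which util is smooth
  have hftilcont : Continuous ftil := by
    rw [hftilL]; exact continuous_const.add L.continuous
  have hW : IsOpen {y | ftil y ≠ 0} := isOpen_ne.preimage hftilcont
  have hScont : ContinuousOn S {y | ftil y ≠ 0} := fun y hy =>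
    ((hdS y hy).differentiableAt.continuousAt).continuousWithinAt
  set V : Set (Fin 2 → ℝ) := {y | ftil y ≠ 0} ∩ S ⁻¹' U with hVdef
  have hVopen : IsOpen V := hScont.isOpen_inter_preimage hW hU
  have hTxV : T x ∈ V := ⟨hftilTx', by simp [hSTx, hx]⟩
  -- derivatives of u
  have hud : ∀ z ∈ U, HasFDerivAt u (fderiv ℝ u z) z := fun z hz =>
    (((hu.contDiffAt (hU.mem_nhds hz)).differentiableAt (by norm_num))).hasFDerivAt
  set p : Fin 2 → ((Fin 2 → ℝ) → ℝ) := fun i => pderiv2 i u with hpdef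
  have hpz : ∀ i z, p i z = fderiv ℝ u z (Pi.single i 1) := fun i z => rfl
  have hpdiff : ∀ (i : Fin 2), ∀ z ∈ U, DifferentiableAt ℝ (p i) z := by
    intro i z hz
    have h2 : ContDiffAt ℝ 1 (fderiv ℝ u) z :=
      (hu.contDiffAt (hU.mem_nhds hz)).fderiv_right (by norm_num)
    have h3 : ContDiffAt ℝ 1 (p i) z := by
      have := ((ContinuousLinearMap.apply ℝ ℝ
        (Pi.single i 1 : Fin 2 → ℝ)).contDiff (𝕜 := ℝ)).contDiffAt.comp z h2
      exact this
    exact h3.differentiableAt (by norm_num)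
  -- first derivative of util on V
  set Ψ : Fin 2 → ((Fin 2 → ℝ) → ℝ) := fun i z =>
    p i z + b i * (u z - (z 0 * p 0 z + z 1 * p 1 z)) with hΨdef
  have hphi : ∀ i : Fin 2, ∀ y ∈ V, pderiv2 i util y = Ψ i (S y) := by
    intro i y hy
    obtain ⟨hy1, hy2⟩ := hy
    have hy1 : ftil y ≠ 0 := hy1
    have hy2 : S y ∈ U := hy2
    have hdu := hud (S y) hy2
    have hcomp : HasFDerivAt (fun z => u (S z)) ((fderiv ℝ u (S y)).comp (DS y)) y :=
      hdu.comp y (hdS y hy1)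
    have hueq : util = fun y => u (S y) * ftil y := funext hutil
    have hmul : HasFDerivAt util
        ((u (S y)) • L + (ftil y) • ((fderiv ℝ u (S y)).comp (DS y))) y := by
      rw [hueq]; exact hcomp.mul (hdftil y)
    have hder : pderiv2 i util y =
        ((u (S y)) • L + (ftil y) • ((fderiv ℝ u (S y)).comp (DS y))) (Pi.single i 1) := by
      rw [pderiv2, hmul.fderiv]
    rw [hder]
    have hyS : y = ftil y • S y := by
      rw [hS, smul_smul, mul_inv_cancel₀ hy1, one_smul]
    have hyj : ∀ j, y j = ftil y * S y j := by
      intro j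
      rw [hS]
      simp only [Pi.smul_apply, smul_eq_mul]
      field_simp
    have hfuy : fderiv ℝ u (S y) y
        = ftil y * ((S y) 0 * p 0 (S y) + (S y) 1 * p 1 (S y)) := by
      rw [clm_eval₂, ← hpz, ← hpz, hyj 0, hyj 1]
      ring
    simp only [ContinuousLinearMap.add_apply, ContinuousLinearMap.coe_smul',
      Pi.smul_apply, ContinuousLinearMap.comp_apply, hDSdef,
      ContinuousLinearMap.smulRight_apply, ContinuousLinearMap.id_apply,
      map_add, map_smul, smul_eq_mul, hLb, hfuy, hΨdef]
    simp only [hpz]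
    field_simp
    ring
  -- second derivatives at T x
  set Dp : Fin 2 → ((Fin 2 → ℝ) →L[ℝ] ℝ) := fun j => fderiv ℝ (p j) x with hDpdef
  have hpd' : ∀ j : Fin 2, HasFDerivAt (p j) (Dp j) x := fun j =>
    (hpdiff j x hx).hasFDerivAt
  have hdux := hud x hx
  set DΨ : Fin 2 → ((Fin 2 → ℝ) →L[ℝ] ℝ) := fun i =>
    Dp i + b i • ((fderiv ℝ u x) -
      ((x 0 • Dp 0 + p 0 x • (ContinuousLinearMap.proj 0 : (Fin 2 → ℝ) →L[ℝ] ℝ))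
        + (x 1 • Dp 1 + p 1 x • (ContinuousLinearMap.proj 1 : (Fin 2 → ℝ) →L[ℝ] ℝ)))) with hDΨdef
  have hΨder : ∀ i : Fin 2, HasFDerivAt (Ψ i) (DΨ i) x := by
    intro i
    have h0 : HasFDerivAt (fun z : Fin 2 → ℝ => z 0 * p 0 z)
        (x 0 • Dp 0 + p 0 x • (ContinuousLinearMap.proj 0 : (Fin 2 → ℝ) →L[ℝ] ℝ)) x := by
      have := (hasFDerivAt_apply (𝕜 := ℝ) 0 x).mul (hpd' 0)
      exact this
    have h1 : HasFDerivAt (fun z : Fin 2 → ℝ => z 1 * p 1 z)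
        (x 1 • Dp 1 + p 1 x • (ContinuousLinearMap.proj 1 : (Fin 2 → ℝ) →L[ℝ] ℝ)) x := by
      have := (hasFDerivAt_apply (𝕜 := ℝ) 1 x).mul (hpd' 1)
      exact this
    have hsum := h0.add h1
    have hsub := hdux.sub hsum
    have hmul := hsub.const_mul (b i)
    exact (hpd' i).add hmul
  -- evaluate: the second partials of util at T x
  have hM : ∀ k i : Fin 2, pderiv2 k (pderiv2 i util) (T x) =
      f x * ((Dp i (Pi.single k 1)
          - b k * (x 0 * Dp i (Pi.single 0 1) + x 1 * Dp i (Pi.single 1 1)))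
        - b i * (x 0 * (Dp 0 (Pi.single k 1)
            - b k * (x 0 * Dp 0 (Pi.single 0 1) + x 1 * Dp 0 (Pi.single 1 1)))
          + x 1 * (Dp 1 (Pi.single k 1)
            - b k * (x 0 * Dp 1 (Pi.single 0 1) + x 1 * Dp 1 (Pi.single 1 1))))) := by
    intro k i
    have heq : pderiv2 i util =ᶠ[nhds (T x)] (fun y => Ψ i (S y)) :=
      Filter.eventuallyEq_of_mem (hVopen.mem_nhds hTxV) (hphi i)
    have hΨx : HasFDerivAt (Ψ i) (DΨ i) (S (T x)) := by
      rw [hSTx]; exact hΨder i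
    have hcomp := hΨx.comp (T x) (hdS (T x) hftilTx')
    have hc2 : HasFDerivAt (fun y => Ψ i (S y)) ((DΨ i).comp (DS (T x))) (T x) := hcomp
    have hder : pderiv2 k (pderiv2 i util) (T x)
        = ((DΨ i).comp (DS (T x))) (Pi.single k 1) := by
      have hfd : fderiv ℝ (pderiv2 i util) (T x) = (DΨ i).comp (DS (T x)) := by
        rw [heq.fderiv_eq, hc2.fderiv]
      show fderiv ℝ (pderiv2 i util) (T x) (Pi.single k 1) = _
      rw [hfd]
    rw [hder, hDΨdef]
    -- now evaluate the continuous linear maps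
    have hw : DS (T x) (Pi.single k 1)
        = (f x) • (Pi.single k (1:ℝ) : Fin 2 → ℝ) + (-(f x) * b k) • x := by
      funext j
      simp only [hDSdef, ContinuousLinearMap.add_apply, ContinuousLinearMap.coe_smul',
        ContinuousLinearMap.smulRight_apply, ContinuousLinearMap.id_apply,
        ContinuousLinearMap.smul_apply, hLb, hftilTx, Pi.add_apply, Pi.smul_apply,
        smul_eq_mul]
      rw [hT]
      simp only [Pi.smul_apply, smul_eq_mul]
      field_simp
    rw [ContinuousLinearMap.comp_apply, hw]
    have hfu : ∀ w : Fin 2 → ℝ, fderiv ℝ u x w = w 0 * p 0 x + w 1 * p 1 x := by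
      intro w; rw [clm_eval₂, hpz, hpz]
    simp only [map_add, map_smul, ContinuousLinearMap.add_apply,
      ContinuousLinearMap.smul_apply, ContinuousLinearMap.sub_apply,
      ContinuousLinearMap.coe_smul', Pi.smul_apply, ContinuousLinearMap.proj_apply,
      smul_eq_mul, hfu]
    have hDpx : ∀ j : Fin 2, Dp j x
        = x 0 * Dp j (Pi.single 0 1) + x 1 * Dp j (Pi.single 1 1) := fun j => clm_eval₂ _ _
    simp only [hDpx]
    have hsk : ∀ j : Fin 2, (Pi.single k (1:ℝ) : Fin 2 → ℝ) j = if k = j then 1 else 0 := by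
      intro j; fin_cases k <;> fin_cases j <;> simp
    rw [hsk, hsk]
    fin_cases k <;> simp <;> try ring
  -- conclude by algebra
  have hdetu : hessDet2 u x =
      Dp 0 (Pi.single 0 1) * Dp 1 (Pi.single 1 1)
        - Dp 1 (Pi.single 0 1) * Dp 0 (Pi.single 1 1) := by
    simp only [hessDet2, pderiv2, hDpdef, hpdef]
  have hb0 : b 0 = -(a₁/a₀) := by simp [hbdef]
  have hb1 : b 1 = -(a₂/a₀) := by simp [hbdef]
  rw [hessDet2, hM 0 0, hM 1 1, hM 0 1, hM 1 0, hdetu, hb0, hb1, hf x]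
  field_simp
  ring
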